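/- Let T be the bilateral forward weighted shift on ℓ²(ℤ, ℂ) defined by (Tx)(n) = w_{n-1} x(n-1) for all n ∈ ℤ, where w_n = R₁ for n ≥ 0 and w_n = R₂ for n < 0, with real numbers 1 < R₁ < R₂. Then T is compound. -/

import Mathlib

open Filter Topology Set Pointwise

variable {X : Type*} [NormedAddCommGroup X] [NormedSpace ℂ X]

/-- `T` is compound: for all nonempty open `U, V` there are `N` and scalars `α n`
with `0 < ‖α n‖ ≤ 1` such that `T^n (α n • U) ∩ V ≠ ∅` for all `n ≥ N`. -/
def Compound (T : X →L[ℂ] X) : Prop :=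
  ∀ U V : Set X, IsOpen U → U.Nonempty → IsOpen V → V.Nonempty →
    ∃ N : ℕ, ∃ α : ℕ → ℂ, ∀ n ≥ N,
      (0 < ‖α n‖ ∧ ‖α n‖ ≤ 1) ∧ (((T ^ n) '' (α n • U)) ∩ V).Nonempty

/-- `T` is topologically mixing. -/
def TopologicallyMixing (T : X →L[ℂ] X) : Prop :=
  ∀ U V : Set X, IsOpen U → U.Nonempty → IsOpen V → V.Nonempty →
    ∃ N : ℕ, ∀ n ≥ N, (((T ^ n) '' U) ∩ V).Nonempty

/-- `T` is disk transitive. -/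
def DiskTransitive (T : X →L[ℂ] X) : Prop :=
  ∀ U V : Set X, IsOpen U → U.Nonempty → IsOpen V → V.Nonempty →
    ∃ n : ℕ, ∃ α : ℂ, 0 < ‖α‖ ∧ ‖α‖ ≤ 1 ∧ (((T ^ n) '' (α • U)) ∩ V).Nonempty

/-- The direct sum `T 0 ⊕ ⋯ ⊕ T (k-1)` is `k`-bitransitive: for all nonempty open
`U i, V i` there are `n` and scalars `α i` with `0 < ‖α i‖ ≤ 1` such that
`(T 0 ⊕ ⋯)^n (α 0 • U 0 ⊕ ⋯) ∩ (V 0 ⊕ ⋯) ≠ ∅`, stated componentwise (an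
intersection of product sets is nonempty iff each componentwise intersection is). -/
def kBitransitive {k : ℕ} (T : Fin k → X →L[ℂ] X) : Prop :=
  ∀ U V : Fin k → Set X,
    (∀ i, IsOpen (U i) ∧ (U i).Nonempty) →
    (∀ i, IsOpen (V i) ∧ (V i).Nonempty) →
    ∃ n : ℕ, ∃ α : Fin k → ℂ,
      (∀ i, 0 < ‖α i‖ ∧ ‖α i‖ ≤ 1) ∧
      ∀ i, (((T i ^ n) '' (α i • U i)) ∩ V i).Nonempty

/-- The cross set `C_T(A,B)`. -/
def crossSet (T : X →L[ℂ] X) (A B : Set X) : Set ℕ :=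
  {n | ∃ α : ℂ, 0 < ‖α‖ ∧ ‖α‖ ≤ 1 ∧ (((T ^ n) '' (α • A)) ∩ B).Nonempty}

/-- The junction set `J_T(A,B)`. -/
def junctionSet (T : X →L[ℂ] X) (A B : Set X) : Set (ℕ × ℂ) :=
  {p | 0 < ‖p.2‖ ∧ ‖p.2‖ ≤ 1 ∧ (((T ^ p.1) '' (p.2 • A)) ∩ B).Nonempty}

/-- A subset of `ℕ × ℂ` is bifinite if it contains `{(n, a n) : n ∈ K}` for some
cofinite `K ⊆ ℕ` and some sequence `a : ℕ → ℂ`. -/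
def Bifinite (A : Set (ℕ × ℂ)) : Prop :=
  ∃ K : Set ℕ, Kᶜ.Finite ∧ ∃ a : ℕ → ℂ, ∀ n ∈ K, (n, a n) ∈ A

set_option maxHeartbeats 1000000

noncomputable section WSAux

namespace WSAux

abbrev H2 := lp (fun _ : ℤ => ℂ) 2

lemma single_norm (i : ℤ) (a : ℂ) : ‖(lp.single 2 i a : H2)‖ = ‖a‖ := by
  have h : (0:ℝ) < (2 : ENNReal).toReal := by norm_num
  simpa using lp.norm_single (E := fun _ : ℤ => ℂ) h (fun _ => a) i

lemma approx (f : H2) (ε : ℝ) (hε : 0 < ε) :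
    ∃ F : Finset ℤ, ‖(∑ i ∈ F, lp.single 2 i (f i)) - f‖ < ε := by
  have h := lp.hasSum_single (E := fun _ : ℤ => ℂ) (p := 2) (by norm_num) f
  have h' : Filter.Tendsto (fun s : Finset ℤ => ∑ i ∈ s, lp.single 2 i (f i))
      atTop (𝓝 f) := h
  obtain ⟨F, hF⟩ := (h'.eventually (Metric.ball_mem_nhds f hε)).exists
  refine ⟨F, ?_⟩
  simpa [Metric.mem_ball, dist_eq_norm] using hF

lemma T_single (w : ℤ → ℂ) (T : H2 →L[ℂ] H2)
    (hT : ∀ (x : H2) (n : ℤ), T x n = w (n - 1) * x (n - 1))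
    (j : ℤ) (a : ℂ) : T (lp.single 2 j a) = lp.single 2 (j+1) (w j * a) := by
  apply lp.ext
  funext n
  rw [show ((T (lp.single 2 j a) : ∀ _ : ℤ, ℂ) n) = T (lp.single 2 j a) n from rfl, hT]
  by_cases h : n = j + 1
  · have h' : n - 1 = j := by omega
    rw [h', h, lp.single_apply_self, lp.single_apply_self]
  · have h' : n - 1 ≠ j := by omega
    rw [lp.single_apply_ne _ _ _ h', lp.single_apply_ne _ _ _ h, mul_zero]

lemma pow_single (w : ℤ → ℂ) (T : H2 →L[ℂ] H2)
    (hT : ∀ (x : H2) (n : ℤ), T x n = w (n - 1) * x (n - 1))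
    (n : ℕ) : ∀ (j : ℤ) (a : ℂ),
    (T ^ n) (lp.single 2 j a) =
      lp.single 2 (j + n) ((∏ ν ∈ Finset.range n, w (j + ν)) * a) := by
  induction n with
  | zero => intro j a; simp
  | succ n ih =>
    intro j a
    rw [pow_succ, ContinuousLinearMap.mul_apply, T_single w T hT, ih (j+1) (w j * a)]
    congr 1
    · push_cast; ring
    · have hprod : ∏ ν ∈ Finset.range (n+1), w (j + ν) =
          (∏ ν ∈ Finset.range n, w (j + 1 + ν)) * w j := by
        rw [Finset.prod_range_succ' (fun ν => w (j + ν)) n]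
        congr 1
        · exact Finset.prod_congr rfl fun ν _ => by congr 1; push_cast; ring
        · congr 1; push_cast; ring
      rw [hprod]; ring

variable {R₁ R₂ : ℝ} {w : ℤ → ℂ}

lemma norm_w (h1 : 0 < R₁) (h2 : 0 < R₂)
    (hw : ∀ n : ℤ, w n = if 0 ≤ n then (R₁ : ℂ) else (R₂ : ℂ)) (k : ℤ) :
    ‖w k‖ = if 0 ≤ k then R₁ else R₂ := by
  rw [hw k]
  split
  · rw [Complex.norm_real]; exact abs_of_pos h1
  · rw [Complex.norm_real]; exact abs_of_pos h2

lemma prod_w_le (hR₁ : 1 < R₁) (hR₁₂ : R₁ < R₂)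
    (hw : ∀ n : ℤ, w n = if 0 ≤ n then (R₁ : ℂ) else (R₂ : ℂ))
    (M n : ℕ) (j : ℤ) (hj : -(M:ℤ) ≤ j) :
    ∏ ν ∈ Finset.range n, ‖w (j + ν)‖ ≤ (R₂/R₁)^M * R₁^n := by
  have h1 : (0:ℝ) < R₁ := by linarith
  have h2 : (0:ℝ) < R₂ := by linarith
  have hrw : ∀ ν ∈ Finset.range n, ‖w (j + ν)‖ = if 0 ≤ j + (ν:ℤ) then R₁ else R₂ :=
    fun ν _ => norm_w h1 h2 hw _
  rw [Finset.prod_congr rfl hrw, Finset.prod_ite, Finset.prod_const, Finset.prod_const]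
  set c₁ := ((Finset.range n).filter (fun (ν : ℕ) => 0 ≤ j + (ν:ℤ))).card with hc₁
  set c₂ := ((Finset.range n).filter (fun (ν : ℕ) => ¬ 0 ≤ j + (ν:ℤ))).card with hc₂
  have hsum : c₁ + c₂ = n := by
    rw [hc₁, hc₂, Finset.card_filter_add_card_filter_not]
    exact Finset.card_range n
  have hc₂M : c₂ ≤ M := by
    have hsub : (Finset.range n).filter (fun (ν : ℕ) => ¬ 0 ≤ j + (ν:ℤ)) ⊆ Finset.range M := by
      intro ν hν
      simp only [Finset.mem_filter, Finset.mem_range, not_le] at hν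
      have := hν.2
      simp only [Finset.mem_range]
      omega
    calc c₂ ≤ (Finset.range M).card := Finset.card_le_card hsub
    _ = M := Finset.card_range M
  have key : R₁ ^ c₁ * R₂ ^ c₂ = (R₂/R₁)^c₂ * R₁^n := by
    rw [← hsum, pow_add]
    rw [div_pow, div_mul_eq_mul_div, eq_div_iff (by positivity)]
    ring
  rw [key]
  have : (R₂/R₁)^c₂ ≤ (R₂/R₁)^M :=
    pow_le_pow_right₀ (by rw [le_div_iff₀ h1]; linarith) hc₂M
  have hRn : (0:ℝ) ≤ R₁ ^ n := by positivity
  nlinarith [this, hRn]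

lemma le_prod_w (hR₁ : 1 < R₁) (hR₁₂ : R₁ < R₂)
    (hw : ∀ n : ℤ, w n = if 0 ≤ n then (R₁ : ℂ) else (R₂ : ℂ))
    (M n : ℕ) (j : ℤ) (hj : j ≤ (M:ℤ)) :
    (R₁/R₂)^M * R₂^n ≤ ∏ ν ∈ Finset.range n, ‖w (j - n + ν)‖ := by
  have h1 : (0:ℝ) < R₁ := by linarith
  have h2 : (0:ℝ) < R₂ := by linarith
  have hrw : ∀ ν ∈ Finset.range n, ‖w (j - n + ν)‖ = if 0 ≤ j - n + (ν:ℤ) then R₁ else R₂ :=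
    fun ν _ => norm_w h1 h2 hw _
  rw [Finset.prod_congr rfl hrw, Finset.prod_ite, Finset.prod_const, Finset.prod_const]
  set c₁ := ((Finset.range n).filter (fun (ν : ℕ) => 0 ≤ j - n + (ν:ℤ))).card with hc₁
  set c₂ := ((Finset.range n).filter (fun (ν : ℕ) => ¬ 0 ≤ j - n + (ν:ℤ))).card with hc₂
  have hsum : c₁ + c₂ = n := by
    rw [hc₁, hc₂, Finset.card_filter_add_card_filter_not]
    exact Finset.card_range n
  have hc₁M : c₁ ≤ M := by
    have hsub : (Finset.range n).filter (fun (ν : ℕ) => 0 ≤ j - n + (ν:ℤ)) ⊆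
        Finset.Ico (n - M) n := by
      intro ν hν
      simp only [Finset.mem_filter, Finset.mem_range] at hν
      simp only [Finset.mem_Ico]
      omega
    calc c₁ ≤ (Finset.Ico (n - M) n).card := Finset.card_le_card hsub
    _ = n - (n - M) := Nat.card_Ico _ _
    _ ≤ M := by omega
  have key : R₁ ^ c₁ * R₂ ^ c₂ = (R₁/R₂)^c₁ * R₂^n := by
    rw [← hsum, pow_add]
    rw [div_pow, div_mul_eq_mul_div, eq_div_iff (by positivity)]
    ring
  rw [key]
  have : (R₁/R₂)^M ≤ (R₁/R₂)^c₁ :=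
    pow_le_pow_of_le_one (by positivity) (by rw [div_le_one h2]; linarith) hc₁M
  have hRn : (0:ℝ) ≤ R₂ ^ n := by positivity
  nlinarith [this, hRn]

end WSAux

end WSAux


open WSAux in
theorem weightedShift_compound' (R₁ R₂ : ℝ) (hR₁ : 1 < R₁) (hR₁₂ : R₁ < R₂)
    (w : ℤ → ℂ) (hw : ∀ n : ℤ, w n = if 0 ≤ n then (R₁ : ℂ) else (R₂ : ℂ))
    (T : lp (fun _ : ℤ => ℂ) 2 →L[ℂ] lp (fun _ : ℤ => ℂ) 2)
    (hT : ∀ (x : lp (fun _ : ℤ => ℂ) 2) (n : ℤ), T x n = w (n - 1) * x (n - 1)) :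
    ∀ U V : Set H2, IsOpen U → U.Nonempty → IsOpen V → V.Nonempty →
    ∃ N : ℕ, ∃ α : ℕ → ℂ, ∀ n ≥ N,
      (0 < ‖α n‖ ∧ ‖α n‖ ≤ 1) ∧ (((T ^ n) '' (α n • U)) ∩ V).Nonempty := by
  intro U V hUo hUne hVo hVne
  have h1 : (0:ℝ) < R₁ := by linarith
  have h2 : (0:ℝ) < R₂ := by linarith
  obtain ⟨u0, hu0⟩ := hUne
  obtain ⟨v0, hv0⟩ := hVne
  obtain ⟨εu, hεu, hUb⟩ := Metric.isOpen_iff.mp hUo u0 hu0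
  obtain ⟨εv, hεv, hVb⟩ := Metric.isOpen_iff.mp hVo v0 hv0
  set ε := min εu εv with hεdef
  have hε : 0 < ε := lt_min hεu hεv
  have hUb' : Metric.ball u0 ε ⊆ U := (Metric.ball_subset_ball (min_le_left _ _)).trans hUb
  have hVb' : Metric.ball v0 ε ⊆ V := (Metric.ball_subset_ball (min_le_right _ _)).trans hVb
  obtain ⟨Fu, hFu⟩ := approx u0 (ε/2) (half_pos hε)
  obtain ⟨Fv, hFv⟩ := approx v0 (ε/2) (half_pos hε)
  set u1 : H2 := ∑ j ∈ Fu, lp.single 2 j (u0 j) with hu1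
  set v1 : H2 := ∑ j ∈ Fv, lp.single 2 j (v0 j) with hv1
  set M : ℕ := (Fu ∪ Fv).sup Int.natAbs with hM
  have hjFu : ∀ j ∈ Fu, -(M:ℤ) ≤ j := by
    intro j hj
    have := Finset.le_sup (f := Int.natAbs) (Finset.mem_union_left Fv hj)
    omega
  have hjFv : ∀ j ∈ Fv, j ≤ (M:ℤ) := by
    intro j hj
    have := Finset.le_sup (f := Int.natAbs) (Finset.mem_union_right Fu hj)
    omega
  set C : ℝ := (R₂/R₁)^M with hCdef
  have hC : 0 < C := by positivity
  set Su : ℝ := ∑ j ∈ Fu, ‖(u0 j : ℂ)‖ with hSu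
  set Sv : ℝ := ∑ j ∈ Fv, ‖(v0 j : ℂ)‖ with hSv
  have hSu0 : 0 ≤ Su := Finset.sum_nonneg fun _ _ => norm_nonneg _
  have hSv0 : 0 ≤ Sv := Finset.sum_nonneg fun _ _ => norm_nonneg _
  set P : ℤ → ℕ → ℂ := fun i n => ∏ ν ∈ Finset.range n, w (i + ν) with hPdef
  have hw0 : ∀ k, w k ≠ 0 := by
    intro k
    rw [hw k]
    split
    · exact_mod_cast (Complex.ofReal_ne_zero.mpr h1.ne')
    · exact_mod_cast (Complex.ofReal_ne_zero.mpr h2.ne')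
  have hP0 : ∀ i n, P i n ≠ 0 := fun i n =>
    Finset.prod_ne_zero_iff.mpr fun ν _ => hw0 _
  have hPnorm : ∀ (i : ℤ) (n : ℕ), ‖P i n‖ = ∏ ν ∈ Finset.range n, ‖w (i + ν)‖ := by
    intro i n
    simp only [hPdef]
    exact norm_prod _ _
  have hPle : ∀ (n : ℕ) (j : ℤ), -(M:ℤ) ≤ j → ‖P j n‖ ≤ C * R₁^n := by
    intro n j hj
    rw [hPnorm]
    exact prod_w_le hR₁ hR₁₂ hw M n j hj
  have hCinv : (R₁/R₂)^M = C⁻¹ := by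
    rw [hCdef, ← inv_pow, inv_div]
  have hPge : ∀ (n : ℕ) (j : ℤ), j ≤ (M:ℤ) → C⁻¹ * R₂^n ≤ ‖P (j - n) n‖ := by
    intro n j hj
    rw [hPnorm, ← hCinv]
    exact le_prod_w hR₁ hR₁₂ hw M n j hj
  have hTn_u1 : ∀ n : ℕ, (T ^ n) u1 = ∑ j ∈ Fu, lp.single 2 (j + n) (P j n * u0 j) := by
    intro n
    rw [hu1, map_sum]
    exact Finset.sum_congr rfl fun j _ => pow_single w T hT n j _
  have hTu_norm : ∀ n : ℕ, ‖(T ^ n) u1‖ ≤ C * Su * R₁ ^ n := by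
    intro n
    rw [hTn_u1 n]
    refine le_trans (norm_sum_le _ _) ?_
    have step1 : ∀ j ∈ Fu, ‖(lp.single 2 (j + n) (P j n * u0 j) : H2)‖ ≤
        (C * R₁^n) * ‖(u0 j : ℂ)‖ := by
      intro j hj
      rw [single_norm, norm_mul]
      exact mul_le_mul_of_nonneg_right (hPle n j (hjFu j hj)) (norm_nonneg _)
    refine le_trans (Finset.sum_le_sum step1) ?_
    rw [← Finset.mul_sum, ← hSu]
    exact le_of_eq (by ring)
  set b : ℕ → H2 := fun n => ∑ j ∈ Fv, lp.single 2 (j - n) (v0 j / P (j - n) n) with hbdef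
  have hTb : ∀ n : ℕ, (T ^ n) (b n) = v1 := by
    intro n
    simp only [hbdef]
    rw [map_sum, hv1]
    refine Finset.sum_congr rfl fun j hj => ?_
    rw [pow_single w T hT n (j - n) _]
    congr 1
    · exact sub_add_cancel j n
    · show P (j - n) n * (v0 j / P (j - n) n) = v0 j
      rw [mul_comm, div_mul_cancel₀ _ (hP0 _ _)]
  have hb_norm : ∀ n : ℕ, ‖b n‖ ≤ C * Sv / R₂ ^ n := by
    intro n
    simp only [hbdef]
    refine le_trans (norm_sum_le _ _) ?_
    have step1 : ∀ j ∈ Fv, ‖(lp.single 2 (j - n) (v0 j / P (j - n) n) : H2)‖ ≤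
        ‖(v0 j : ℂ)‖ / (C⁻¹ * R₂^n) := by
      intro j hj
      rw [single_norm, norm_div]
      have hd : (0:ℝ) < C⁻¹ * R₂^n := by positivity
      exact div_le_div_of_nonneg_left (norm_nonneg _) hd (hPge n j (hjFv j hj))
    refine le_trans (Finset.sum_le_sum step1) ?_
    rw [← Finset.sum_div, ← hSv]
    refine le_of_eq ?_
    rw [eq_div_iff (by positivity : (R₂:ℝ)^n ≠ 0), div_mul_eq_mul_div,
      div_eq_iff (by positivity : C⁻¹ * (R₂:ℝ)^n ≠ 0)]
    field_simp
  obtain ⟨aa, hapos, hale1, hale, hainv⟩ :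
      ∃ aa : ℕ → ℝ, (∀ n, 0 < aa n) ∧ (∀ n, aa n ≤ 1) ∧
        (∀ n, aa n ≤ ε / (2 * (C*Su + 1) * R₁ ^ n)) ∧
        (∀ n, (aa n)⁻¹ ≤ 1 + 2 * (C*Su + 1) * R₁^n / ε) := by
    refine ⟨fun n => min 1 (ε / (2 * (C*Su + 1) * R₁ ^ n)),
      fun n => lt_min one_pos (by positivity), fun n => min_le_left _ _,
      fun n => min_le_right _ _, fun n => ?_⟩
    have hX : 0 ≤ 2 * (C*Su+1) * R₁^n / ε := by positivity
    show (min 1 (ε / (2 * (C*Su + 1) * R₁ ^ n)))⁻¹ ≤ _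
    rcases min_cases (1:ℝ) (ε / (2 * (C*Su+1) * R₁^n)) with ⟨heq, _⟩ | ⟨heq, _⟩ <;> rw [heq]
    · rw [inv_one]; linarith
    · rw [inv_div]; linarith
  have ht1 : Filter.Tendsto (fun n : ℕ => (1/R₂)^n) atTop (𝓝 0) :=
    tendsto_pow_atTop_nhds_zero_of_lt_one (by positivity) (by rw [div_lt_one h2]; linarith)
  have ht2 : Filter.Tendsto (fun n : ℕ => (R₁/R₂)^n) atTop (𝓝 0) :=
    tendsto_pow_atTop_nhds_zero_of_lt_one (by positivity) (by rw [div_lt_one h2]; linarith)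
  have ht : Filter.Tendsto
      (fun n : ℕ => C*Sv*(1/R₂)^n + (2*(C*Su+1)*(C*Sv)/ε)*(R₁/R₂)^n) atTop (𝓝 0) := by
    have := (ht1.const_mul (C*Sv)).add (ht2.const_mul (2*(C*Su+1)*(C*Sv)/ε))
    simpa using this
  have hev := ht.eventually (gt_mem_nhds (half_pos hε))
  obtain ⟨N, hN⟩ := eventually_atTop.mp hev
  refine ⟨N, fun n => ((aa n : ℝ) : ℂ), fun n hn => ?_⟩
  have hβnorm : ‖((aa n : ℝ) : ℂ)‖ = aa n := by
    rw [Complex.norm_real]; exact abs_of_pos (hapos n)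
  have hβ0 : ((aa n : ℝ) : ℂ) ≠ 0 := Complex.ofReal_ne_zero.mpr (hapos n).ne'
  refine ⟨⟨by rw [hβnorm]; exact hapos n, by rw [hβnorm]; exact hale1 n⟩, ?_⟩
  have hbb : (aa n)⁻¹ * ‖b n‖ < ε/2 := by
    have e1 : (aa n)⁻¹ * ‖b n‖ ≤ (1 + 2*(C*Su+1)*R₁^n/ε) * (C*Sv/R₂^n) :=
      mul_le_mul (hainv n) (hb_norm n) (norm_nonneg _) (by positivity)
    have e2 : (1 + 2*(C*Su+1)*R₁^n/ε) * (C*Sv/R₂^n)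
        = C*Sv*(1/R₂)^n + (2*(C*Su+1)*(C*Sv)/ε)*(R₁/R₂)^n := by
      rw [div_pow, div_pow, one_pow]
      field_simp
    rw [e2] at e1
    exact lt_of_le_of_lt e1 (hN n hn)
  have hmain : aa n * ‖(T ^ n) u1‖ < ε/2 := by
    have b1 : aa n * ‖(T ^ n) u1‖ ≤ aa n * (C*Su*R₁^n) :=
      mul_le_mul_of_nonneg_left (hTu_norm n) (hapos n).le
    have b2 : aa n * (C*Su*R₁^n) ≤ (ε / (2*(C*Su+1)*R₁^n)) * (C*Su*R₁^n) :=
      mul_le_mul_of_nonneg_right (hale n) (by positivity)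
    have hpow : (0:ℝ) < R₁^n := by positivity
    have b3 : (ε / (2*(C*Su+1)*R₁^n)) * (C*Su*R₁^n) < ε/2 := by
      rw [div_mul_eq_mul_div, div_lt_div_iff₀ (by positivity) two_pos]
      nlinarith [mul_pos hε hpow, hC, hSu0]
    linarith
  have hxU : u1 + (((aa n : ℝ) : ℂ))⁻¹ • b n ∈ U := by
    apply hUb'
    rw [Metric.mem_ball, dist_eq_norm]
    have hsplit : u1 + (((aa n:ℝ):ℂ))⁻¹ • b n - u0 = (u1 - u0) + (((aa n:ℝ):ℂ))⁻¹ • b n := by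
      abel
    rw [hsplit]
    refine lt_of_le_of_lt (norm_add_le _ _) ?_
    have h6 : ‖(((aa n:ℝ):ℂ))⁻¹ • b n‖ = (aa n)⁻¹ * ‖b n‖ := by
      rw [norm_smul, norm_inv, hβnorm]
    rw [h6]
    linarith [hFu, hbb]
  refine ⟨(T ^ n) (((aa n:ℝ):ℂ) • (u1 + (((aa n:ℝ):ℂ))⁻¹ • b n)),
    ⟨((aa n:ℝ):ℂ) • (u1 + (((aa n:ℝ):ℂ))⁻¹ • b n), smul_mem_smul_set hxU, rfl⟩, ?_⟩
  have hval : (T ^ n) (((aa n:ℝ):ℂ) • (u1 + (((aa n:ℝ):ℂ))⁻¹ • b n))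
      = ((aa n:ℝ):ℂ) • (T ^ n) u1 + v1 := by
    rw [smul_add, smul_inv_smul₀ hβ0, map_add, map_smul, hTb n]
  rw [hval]
  apply hVb'
  rw [Metric.mem_ball, dist_eq_norm]
  have hsplit2 : ((aa n:ℝ):ℂ) • (T^n) u1 + v1 - v0 = ((aa n:ℝ):ℂ) • (T^n) u1 + (v1 - v0) := by
    abel
  rw [hsplit2]
  refine lt_of_le_of_lt (norm_add_le _ _) ?_
  have h7 : ‖((aa n:ℝ):ℂ) • (T^n) u1‖ = aa n * ‖(T^n) u1‖ := by rw [norm_smul, hβnorm]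
  rw [h7]
  linarith [hFv, hmain]

/-- the bilateral forward weighted shift on `ℓ²(ℤ, ℂ)` with weights
`wₙ = R₁` for `n ≥ 0` and `wₙ = R₂` for `n < 0`, where `1 < R₁ < R₂`, is compound. -/
theorem weightedShift_compound (R₁ R₂ : ℝ) (hR₁ : 1 < R₁) (hR₁₂ : R₁ < R₂)
    (w : ℤ → ℂ) (hw : ∀ n : ℤ, w n = if 0 ≤ n then (R₁ : ℂ) else (R₂ : ℂ))
    (T : lp (fun _ : ℤ => ℂ) 2 →L[ℂ] lp (fun _ : ℤ => ℂ) 2)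
    (hT : ∀ (x : lp (fun _ : ℤ => ℂ) 2) (n : ℤ), T x n = w (n - 1) * x (n - 1)) :
    Compound T := by
  exact weightedShift_compound' R₁ R₂ hR₁ hR₁₂ w hw T hT
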